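/- Every finite poset with a global minimum whose cover graph admits a U-coloring is a lattice. -/

import Mathlib

def UColoring {V κ : Type*} (A : V → V → Prop) (c : V → V → κ) : Prop :=
  (∀ v u w : V, A v u → A v w → u ≠ w → c v u ≠ c v w) ∧
  (∀ v u w : V, A v u → A v w → u ≠ w →
    ∃ z : V, A u z ∧ A w z ∧ c v u = c w z ∧ c v w = c u z)

section Aux

variable {P : Type} [PartialOrder P] [Fintype P]

open Classical in
/-- cardinality of the principal down-set of `t`. -/
noncomputable def dC (t : P) : ℕ := (Finset.univ.filter (· ≤ t)).card

open Classical in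
/-- cardinality of the principal up-set of `v`. -/
noncomputable def uC (v : P) : ℕ := (Finset.univ.filter (v ≤ ·)).card

/-- the induction measure. -/
noncomputable def MM (v t : P) : ℕ := (Fintype.card P + 1) * uC v + dC t

lemma dC_le (t : P) : dC t ≤ Fintype.card P := by
  classical
  unfold dC
  simpa using (Finset.card_filter_le Finset.univ (· ≤ t)).trans
    (le_of_eq Finset.card_univ)

lemma uC_lt {v v' : P} (h : v < v') : uC v' < uC v := by
  classical
  unfold uC
  apply Finset.card_lt_card
  refine (Finset.ssubset_iff_of_subset ?_).mpr ?_
  · intro x hx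
    simp only [Finset.mem_filter, Finset.mem_univ, true_and] at hx ⊢
    exact h.le.trans hx
  · exact ⟨v, by simp, by simp [h.not_ge]⟩

lemma dC_lt {t t' : P} (h : t' < t) : dC t' < dC t := by
  classical
  unfold dC
  apply Finset.card_lt_card
  refine (Finset.ssubset_iff_of_subset ?_).mpr ?_
  · intro x hx
    simp only [Finset.mem_filter, Finset.mem_univ, true_and] at hx ⊢
    exact hx.trans h.le
  · exact ⟨t, by simp, by simp [h.not_ge]⟩

lemma MM_lt_left {v v' t s : P} (h : v < v') : MM v' s < MM v t := by
  have h1 := uC_lt h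
  have h2 := dC_le (P := P) s
  unfold MM
  nlinarith

lemma MM_lt_right {v t t' : P} (h : t' < t) : MM v t' < MM v t := by
  have := dC_lt h
  unfold MM
  omega

/-- existence of a cover between two comparable elements. -/
lemma exists_cov_le {v t : P} (h : v < t) : ∃ x, v ⋖ x ∧ x ≤ t := by
  classical
  obtain ⟨m, hm, hmin⟩ := Finset.exists_minimal
    (s := Finset.univ.filter (fun x => v < x ∧ x ≤ t)) ⟨t, by simp [h]⟩
  simp only [Finset.mem_filter, Finset.mem_univ, true_and] at hm
  refine ⟨m, ⟨hm.1, fun y hy1 hy2 => ?_⟩, hm.2⟩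
  exact hy2.not_ge (hmin (by simp [hy1, hy2.le.trans hm.2]) hy2.le)

/-- existence of a cover below a non-minimal element. -/
lemma exists_cov_below {v t : P} (h : v < t) : ∃ x, x ⋖ t := by
  classical
  obtain ⟨m, hm, hmax⟩ := Finset.exists_maximal
    (s := Finset.univ.filter (fun x => x < t)) ⟨v, by simp [h]⟩
  simp only [Finset.mem_filter, Finset.mem_univ, true_and] at hm
  exact ⟨m, hm, fun y hy1 hy2 => hy1.not_ge (hmax (by simp [hy2]) hy1.le)⟩

/-- The main lemma: if `v ⋖ u` and `v ≤ t`, then `u` and `t` have a least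
upper bound `j`; moreover, if `u ≰ t`, then `j` covers `t` and the edge
`t ⋖ j` has the same color as the edge `v ⋖ u`. -/
lemma main_lemma {κ : Type} (c : P → P → κ) (hU : UColoring (· ⋖ ·) c) :
    ∀ n : ℕ, ∀ v u t : P, MM v t < n → v ⋖ u → v ≤ t →
      ∃ j : P, IsLUB {u, t} j ∧ (¬ u ≤ t → t ⋖ j ∧ c t j = c v u) := by
  intro n
  induction n with
  | zero => intro v u t hM; omega
  | succ n ih =>
    intro v u t hM hvu hvt
    by_cases hut : u ≤ t
    · refine ⟨t, ⟨?_, ?_⟩, fun h => absurd hut h⟩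
      · rintro x hx
        simp only [Set.mem_insert_iff, Set.mem_singleton_iff] at hx
        rcases hx with rfl | rfl
        · exact hut
        · exact le_rfl
      · intro s hs
        exact hs (by simp)
    · rcases eq_or_lt_of_le hvt with rfl | hvt'
      · -- t = v : join is u itself
        refine ⟨u, ⟨?_, ?_⟩, fun _ => ⟨hvu, rfl⟩⟩
        · rintro x hx
          simp only [Set.mem_insert_iff, Set.mem_singleton_iff] at hx
          rcases hx with rfl | rfl
          · exact le_rfl
          · exact hvu.le
        · intro s hs
          exact hs (by simp)
      · obtain ⟨x₁, hvx₁, hx₁t⟩ := exists_cov_le hvt'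
        have hux₁ : u ≠ x₁ := fun h => hut (h ▸ hx₁t)
        obtain ⟨z, huz, hx₁z, hc1, hc2⟩ := hU.2 v u x₁ hvu hvx₁ hux₁
        rcases eq_or_lt_of_le hx₁t with rfl | hx₁t'
        · -- base case: t (= x₁) covers v
          refine ⟨z, ⟨?_, ?_⟩, fun _ => ⟨hx₁z, hc1.symm⟩⟩
          · rintro x hx
            simp only [Set.mem_insert_iff, Set.mem_singleton_iff] at hx
            rcases hx with rfl | rfl
            · exact huz.le
            · exact hx₁z.le
          · intro s hs
            have hsu : u ≤ s := hs (by simp)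
            have hst : x₁ ≤ s := hs (by simp)
            by_contra hzs
            obtain ⟨j, hj, hjc⟩ := ih x₁ z s
              (lt_of_lt_of_le (MM_lt_left hvx₁.lt) (Nat.lt_succ_iff.mp hM))
              hx₁z hst
            obtain ⟨j', hj', hjc'⟩ := ih u z s
              (lt_of_lt_of_le (MM_lt_left hvu.lt) (Nat.lt_succ_iff.mp hM))
              huz hsu
            have hjj : j = j' := hj.unique hj'
            obtain ⟨hcov, hcol⟩ := hjc hzs
            obtain ⟨hcov', hcol'⟩ := hjc' hzs
            refine hU.1 v u x₁ hvu hvx₁ hux₁ ?_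
            rw [hc1, hc2, ← hcol, ← hcol', hjj]
        · -- inductive step: x₁ < t
          obtain ⟨j₁, hj₁, hj₁c⟩ := ih v u x₁
            (lt_of_lt_of_le (MM_lt_right hx₁t') (Nat.lt_succ_iff.mp hM))
            hvu hvx₁.le
          have hux₁' : ¬ u ≤ x₁ := by
            intro h
            rcases eq_or_lt_of_le h with rfl | h'
            · exact hux₁ rfl
            · exact hvx₁.2 hvu.lt h'
          obtain ⟨hcov₁, hcol₁⟩ := hj₁c hux₁'
          have hzj₁ : z = j₁ := by
            by_contra hne
            exact hU.1 x₁ z j₁ hx₁z hcov₁ hne (by rw [← hc1, hcol₁])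
          subst hzj₁
          obtain ⟨j, hj, hjc⟩ := ih x₁ z t
            (lt_of_lt_of_le (MM_lt_left hvx₁.lt) (Nat.lt_succ_iff.mp hM))
            hx₁z hx₁t
          have hzt : ¬ z ≤ t := fun h => hut (huz.le.trans h)
          obtain ⟨hcovt, hcolt⟩ := hjc hzt
          refine ⟨j, ⟨?_, ?_⟩, fun _ => ⟨hcovt, by rw [hcolt, ← hc1]⟩⟩
          · rintro x hx
            simp only [Set.mem_insert_iff, Set.mem_singleton_iff] at hx
            have hzj : z ≤ j := hj.1 (by simp)
            have htj : t ≤ j := hj.1 (by simp)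
            rcases hx with rfl | rfl
            · exact huz.le.trans hzj
            · exact htj
          · intro s hs
            have hsu : u ≤ s := hs (by simp)
            have hst : t ≤ s := hs (by simp)
            have hsx₁ : x₁ ≤ s := hx₁t.trans hst
            have hzs : z ≤ s := hj₁.2 (by
              rintro x hx
              simp only [Set.mem_insert_iff, Set.mem_singleton_iff] at hx
              rcases hx with rfl | rfl
              · exact hsu
              · exact hsx₁)
            exact hj.2 (by
              rintro x hx
              simp only [Set.mem_insert_iff, Set.mem_singleton_iff] at hx
              rcases hx with rfl | rfl
              · exact hzs
              · exact hst)

/-- every pair of elements has a least upper bound. -/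
lemma join_exists {κ : Type} [OrderBot P] (c : P → P → κ)
    (hU : UColoring (· ⋖ ·) c) :
    ∀ n : ℕ, ∀ a b : P, dC a < n → ∃ j : P, IsLUB {a, b} j := by
  intro n
  induction n with
  | zero => intro a b h; omega
  | succ n ih =>
    intro a b hM
    rcases eq_or_ne a ⊥ with rfl | ha
    · refine ⟨b, ⟨?_, ?_⟩⟩
      · rintro x hx
        simp only [Set.mem_insert_iff, Set.mem_singleton_iff] at hx
        rcases hx with rfl | rfl
        · exact bot_le
        · exact le_rfl
      · intro s hs
        exact hs (by simp)
    · obtain ⟨a', ha'⟩ := exists_cov_below (bot_lt_iff_ne_bot.mpr ha)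
      obtain ⟨j', hj'⟩ := ih a' b
        (lt_of_lt_of_le (dC_lt ha'.lt) (Nat.lt_succ_iff.mp hM))
      have ha'j' : a' ≤ j' := hj'.1 (by simp)
      obtain ⟨j, hj, -⟩ := main_lemma c hU (MM a' j' + 1) a' a j'
        (Nat.lt_succ_self _) ha' ha'j'
      refine ⟨j, ⟨?_, ?_⟩⟩
      · rintro x hx
        simp only [Set.mem_insert_iff, Set.mem_singleton_iff] at hx
        have hbj' : b ≤ j' := hj'.1 (by simp)
        have hj'j : j' ≤ j := hj.1 (by simp)
        rcases hx with rfl | rfl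
        · exact hj.1 (by simp)
        · exact hbj'.trans hj'j
      · intro s hs
        have hsa : a ≤ s := hs (by simp)
        have hsb : b ≤ s := hs (by simp)
        have hsj' : j' ≤ s := hj'.2 (by
          rintro x hx
          simp only [Set.mem_insert_iff, Set.mem_singleton_iff] at hx
          rcases hx with rfl | rfl
          · exact ha'.le.trans hsa
          · exact hsb)
        exact hj.2 (by
          rintro x hx
          simp only [Set.mem_insert_iff, Set.mem_singleton_iff] at hx
          rcases hx with rfl | rfl
          · exact hsa
          · exact hsj')

/-- every finite set has a least upper bound. -/
lemma finset_lub {κ : Type} [OrderBot P] (c : P → P → κ)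
    (hU : UColoring (· ⋖ ·) c) (s : Finset P) : ∃ j : P, IsLUB ↑s j := by
  classical
  induction s using Finset.induction_on with
  | empty => exact ⟨⊥, Finset.coe_empty (α := P) ▸ isLUB_empty⟩
  | @insert a s' hx ih =>
    obtain ⟨j', hj'⟩ := ih
    obtain ⟨j, hj⟩ := join_exists c hU (dC a + 1) a j' (Nat.lt_succ_self _)
    refine ⟨j, ⟨?_, ?_⟩⟩
    · intro x hxm
      simp only [Finset.coe_insert, Set.mem_insert_iff] at hxm
      rcases hxm with rfl | hxm
      · exact hj.1 (by simp)
      · exact (hj'.1 hxm).trans (hj.1 (by simp))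
    · intro t ht
      have hat : a ≤ t := ht (by simp)
      have hj't : j' ≤ t := hj'.2 (fun x hxm => ht (by simp [hxm]))
      exact hj.2 (by
        rintro x hxm
        simp only [Set.mem_insert_iff, Set.mem_singleton_iff] at hxm
        rcases hxm with rfl | rfl
        · exact hat
        · exact hj't)

end Aux

/-- Every finite poset with a global minimum whose cover graph admits a
U-coloring is a lattice: every pair of elements has a least upper bound and a
greatest lower bound. -/
theorem stmt_6 {P κ : Type} [PartialOrder P] [Fintype P] [OrderBot P]
    (c : P → P → κ) (hU : UColoring (· ⋖ ·) c) :
    ∀ a b : P, (∃ s : P, IsLUB {a, b} s) ∧ (∃ m : P, IsGLB {a, b} m) := by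
  classical
  intro a b
  constructor
  · exact join_exists c hU (dC a + 1) a b (Nat.lt_succ_self _)
  · set L : Finset P := Finset.univ.filter (fun x => x ≤ a ∧ x ≤ b) with hL
    obtain ⟨m, hm⟩ := finset_lub c hU L
    have hma : m ≤ a := hm.2 (by
      intro x hx
      simp only [hL, Finset.coe_filter, Set.mem_setOf_eq, Finset.mem_univ,
        true_and] at hx
      exact hx.1)
    have hmb : m ≤ b := hm.2 (by
      intro x hx
      simp only [hL, Finset.coe_filter, Set.mem_setOf_eq, Finset.mem_univ,
        true_and] at hx
      exact hx.2)
    refine ⟨m, ⟨?_, ?_⟩⟩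
    · rintro x hx
      simp only [Set.mem_insert_iff, Set.mem_singleton_iff] at hx
      rcases hx with rfl | rfl
      · exact hma
      · exact hmb
    · intro x hx
      have hxa : x ≤ a := hx (by simp)
      have hxb : x ≤ b := hx (by simp)
      exact hm.1 (by simp [hL, hxa, hxb])
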